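/- Let F : ℝ → ℝ be smooth. Suppose there exist constants A, B, C, K, L, M with A ≠ 0 and discriminant condition (B·p + K)² − A(C·p² + 2L·p + M) > 0 on an interval I, and define F(p) := (−(Bp + K) + sqrt((Bp+K)² − A(Cp² + 2Lp + M)))/A on I. Then A·F(p)² + 2B·F(p)·p + C·p² + 2K·F(p) + 2L·p + M = 0 for all p ∈ I, and consequently the Monge invariant 9(F'')² F⁽⁵⁾ − 45 F'' F''' F'''' + 40 (F''')³ vanishes on I wherever F'' ≠ 0. -/

import Mathlib

/-- The Monge invariant of a function `F` of one variable. -/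
noncomputable def monge (F : ℝ → ℝ) (p : ℝ) : ℝ :=
  9 * (iteratedDeriv 2 F p) ^ 2 * iteratedDeriv 5 F p
    - 45 * iteratedDeriv 2 F p * iteratedDeriv 3 F p * iteratedDeriv 4 F p
    + 40 * (iteratedDeriv 3 F p) ^ 3

noncomputable section
namespace MongeAux

variable (a b c : ℝ)

def Sf (x : ℝ) : ℝ := Real.sqrt (a*x^2+2*b*x+c)
def G1 (x : ℝ) : ℝ := (a*x+b) / Sf a b c x
def G2 (x : ℝ) : ℝ := (a*c-b^2) / (Sf a b c x)^3
def G3 (x : ℝ) : ℝ := -3*(a*c-b^2)*(a*x+b) / (Sf a b c x)^5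
def G4 (x : ℝ) : ℝ := -3*(a*c-b^2)*(a*(a*x^2+2*b*x+c) - 5*(a*x+b)^2) / (Sf a b c x)^7
def G5 (x : ℝ) : ℝ := 15*(a*c-b^2)*(a*x+b)*(3*a*(a*x^2+2*b*x+c) - 7*(a*x+b)^2) / (Sf a b c x)^9

variable {a b c} {p : ℝ} (hQ : 0 < a*p^2+2*b*p+c)

theorem hQd : HasDerivAt (fun x : ℝ => a*x^2+2*b*x+c) (2*(a*p+b)) p := by
  have h := (((hasDerivAt_pow 2 p).const_mul a).add ((hasDerivAt_id p).const_mul (2*b))).add_const c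
  refine h.congr_deriv ?_
  simp; ring

theorem hud : HasDerivAt (fun x : ℝ => a*x+b) a p := by
  simpa using ((hasDerivAt_id p).const_mul a).add_const b

include hQ

theorem Spos : 0 < Sf a b c p := Real.sqrt_pos.2 hQ

theorem hs2 : (Sf a b c p)^2 = a*p^2+2*b*p+c := Real.sq_sqrt hQ.le

theorem hSd : HasDerivAt (Sf a b c) (G1 a b c p) p := by
  have h := (hQd (a := a) (b := b) (c := c) (p := p)).sqrt (ne_of_gt hQ)
  refine h.congr_deriv ?_
  have hs := (Spos hQ).ne'
  unfold G1; unfold Sf at hs ⊢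
  field_simp

theorem hG1d : HasDerivAt (G1 a b c) (G2 a b c p) p := by
  have h := (hud (a:=a) (b:=b) (p:=p)).div (hSd hQ) (Spos hQ).ne'
  refine h.congr_deriv ?_
  have hs := (Spos hQ).ne'
  have h2 := hs2 (a := a) (b := b) (c := c) hQ
  unfold G2 G1
  have key : a*c-b^2 = a * (Sf a b c p)^2 - (a*p+b)^2 := by rw [h2]; ring
  rw [key]; field_simp

theorem hG2d : HasDerivAt (G2 a b c) (G3 a b c p) p := by
  have h := (hasDerivAt_const p (a*c-b^2)).div ((hSd hQ).pow 3) (pow_ne_zero 3 (Spos hQ).ne')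
  refine h.congr_deriv ?_
  have hs := (Spos hQ).ne'
  unfold G3 G1
  simp only [Pi.pow_apply]
  field_simp; ring

theorem hG3d : HasDerivAt (G3 a b c) (G4 a b c p) p := by
  have hn : HasDerivAt (fun x : ℝ => -3*(a*c-b^2)*(a*x+b)) (-3*(a*c-b^2)*a) p :=
    (hud (a:=a) (b:=b) (p:=p)).const_mul _
  have h := hn.div ((hSd hQ).pow 5) (pow_ne_zero 5 (Spos hQ).ne')
  refine h.congr_deriv ?_
  have hs := (Spos hQ).ne'
  have h2 := hs2 (a := a) (b := b) (c := c) hQ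
  unfold G4 G1
  simp only [Pi.pow_apply]
  rw [← h2]
  field_simp; ring

theorem hG4d : HasDerivAt (G4 a b c) (G5 a b c p) p := by
  have hn : HasDerivAt (fun x : ℝ => -3*(a*c-b^2)*(a*(a*x^2+2*b*x+c) - 5*(a*x+b)^2))
      (-3*(a*c-b^2)*(a*(2*(a*p+b)) - 5*(2*(a*p+b)^1*a))) p := by
    exact (((hQd (a:=a) (b:=b) (c:=c) (p:=p)).const_mul a).sub (((hud (a:=a) (b:=b) (p:=p)).pow 2).const_mul 5)).const_mul _
  have h := hn.div ((hSd hQ).pow 7) (pow_ne_zero 7 (Spos hQ).ne')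
  refine h.congr_deriv ?_
  have hs := (Spos hQ).ne'
  have h2 := hs2 (a := a) (b := b) (c := c) hQ
  unfold G5 G1
  simp only [Pi.pow_apply]
  rw [← h2]
  field_simp; ring

end MongeAux

open MongeAux

/-- Solving the conic relation with `A ≠ 0` by the quadratic formula:
the resulting branch satisfies the conic relation on the interval where the
discriminant is positive, and consequently its Monge invariant vanishes there
wherever its second derivative is nonzero. -/


theorem quadratic_branch_satisfies_conic_and_monge (A B C K L M : ℝ) (hA : A ≠ 0)
    (I : Set ℝ) (hI : IsOpen I)
    (hdisc : ∀ p ∈ I, 0 < (B * p + K) ^ 2 - A * (C * p ^ 2 + 2 * L * p + M)) :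
    ∀ F : ℝ → ℝ,
      F = (fun p => (-(B * p + K)
            + Real.sqrt ((B * p + K) ^ 2 - A * (C * p ^ 2 + 2 * L * p + M))) / A) →
      (∀ p ∈ I,
        A * (F p) ^ 2 + 2 * B * F p * p + C * p ^ 2 + 2 * K * F p + 2 * L * p + M = 0) ∧
      (∀ p ∈ I, iteratedDeriv 2 F p ≠ 0 → monge F p = 0) := by
  intro F hF
  set a := B^2 - A*C with ha
  set b := B*K - A*L with hb
  set c := K^2 - A*M with hc
  have hDQ : ∀ x : ℝ, (B * x + K) ^ 2 - A * (C * x ^ 2 + 2 * L * x + M)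
      = a*x^2+2*b*x+c := by intro x; rw [ha, hb, hc]; ring
  have hFeq : F = fun x => (-(B*x+K) + Sf a b c x)/A := by
    rw [hF]; funext x; rw [Sf, hDQ]
  constructor
  · intro p hp
    have hs2 : Real.sqrt ((B * p + K) ^ 2 - A * (C * p ^ 2 + 2 * L * p + M)) ^ 2
        = (B * p + K) ^ 2 - A * (C * p ^ 2 + 2 * L * p + M) :=
      Real.sq_sqrt (hdisc p hp).le
    rw [hF]
    field_simp
    ring_nf at hs2 ⊢
    linear_combination hs2
  · intro p hp _
    set U : Set ℝ := {x | 0 < a*x^2+2*b*x+c} with hU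
    have hUo : IsOpen U := isOpen_lt continuous_const (by continuity)
    have hpU : p ∈ U := by
      have := hdisc p hp; rw [hDQ] at this; exact this
    have hF0 : ∀ x ∈ U, HasDerivAt F ((-B + G1 a b c x)/A) x := by
      intro x hx
      rw [hFeq]
      have h := (((((hasDerivAt_id x).const_mul B).add_const K).neg).add (hSd hx)).div_const A
      refine h.congr_deriv ?_
      simp
    have hF1d : ∀ x ∈ U, HasDerivAt (fun y => (-B + G1 a b c y)/A) (G2 a b c x / A) x := by
      intro x hx
      have h := ((hasDerivAt_const x (-B)).add (hG1d hx)).div_const A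
      refine h.congr_deriv ?_
      simp
    have E2 : ∀ x ∈ U, iteratedDeriv 2 F x = G2 a b c x / A := by
      intro x hx
      have heq : deriv F =ᶠ[nhds x] (fun y => (-B + G1 a b c y)/A) :=
        Filter.eventuallyEq_of_mem (hUo.mem_nhds hx) (fun y hy => (hF0 y hy).deriv)
      rw [show (2:ℕ) = 1+1 from rfl, iteratedDeriv_succ, iteratedDeriv_one,
        heq.deriv_eq, (hF1d x hx).deriv]
    have E3 : ∀ x ∈ U, iteratedDeriv 3 F x = G3 a b c x / A := by
      intro x hx
      have heq : iteratedDeriv 2 F =ᶠ[nhds x] (fun y => G2 a b c y / A) :=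
        Filter.eventuallyEq_of_mem (hUo.mem_nhds hx) (fun y hy => E2 y hy)
      rw [show (3:ℕ) = 2+1 from rfl, iteratedDeriv_succ, heq.deriv_eq,
        (((hG2d hx).div_const A)).deriv]
    have E4 : ∀ x ∈ U, iteratedDeriv 4 F x = G4 a b c x / A := by
      intro x hx
      have heq : iteratedDeriv 3 F =ᶠ[nhds x] (fun y => G3 a b c y / A) :=
        Filter.eventuallyEq_of_mem (hUo.mem_nhds hx) (fun y hy => E3 y hy)
      rw [show (4:ℕ) = 3+1 from rfl, iteratedDeriv_succ, heq.deriv_eq,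
        (((hG3d hx).div_const A)).deriv]
    have E5 : ∀ x ∈ U, iteratedDeriv 5 F x = G5 a b c x / A := by
      intro x hx
      have heq : iteratedDeriv 4 F =ᶠ[nhds x] (fun y => G4 a b c y / A) :=
        Filter.eventuallyEq_of_mem (hUo.mem_nhds hx) (fun y hy => E4 y hy)
      rw [show (5:ℕ) = 4+1 from rfl, iteratedDeriv_succ, heq.deriv_eq,
        (((hG4d hx).div_const A)).deriv]
    have hs := (Spos (a := a) (b := b) (c := c) hpU).ne'
    rw [monge, E2 p hpU, E3 p hpU, E4 p hpU, E5 p hpU, G2, G3, G4, G5]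
    field_simp
    ring
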